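/- arXiv:2511.00495 — 2 statements merged into one kernel-verified Lean document; each statement's English description precedes it below -/
import Mathlib

section
/- Let f : ℝⁿ × ℝᵐ → ℝⁿ and h : ℝⁿ × ℝᵐ → ℝᵐ satisfy the dissipativity condition Σᵢ fᵢ(Y,C)·Yᵢ + Σⱼ hⱼ(Y,C)·Cⱼ ≤ −α(|Y|² + |C|²) + β for all Y, C, with α > 0, β ≥ 0. Suppose Y, C : [0,T] → ℝⁿ × ℝᵐ are differentiable with Y' = r(t)·f(Y,C) and C' = r(t)·h(Y,C), where 0 < r_min ≤ r(t) ≤ r_max. Then E(t) := ½(|Y(t)|² + |C(t)|²) satisfies E(t) ≤ E(0) + β·r_max/(2α·r_min) for all t ∈ [0,T]. -/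
/-- Finite-dimensional energy estimate: under the dissipativity condition
`⟪f(Y,C),Y⟫ + ⟪h(Y,C),C⟫ ≤ −α(|Y|²+|C|²) + β`, solutions of the reaction ODE
`Y' = r(t) f(Y,C)`, `C' = r(t) h(Y,C)` with `0 < r_min ≤ r(t) ≤ r_max` satisfy
`E(t) ≤ E(0) + β r_max / (2 α r_min)` where `E = ½(|Y|²+|C|²)`. -/
theorem stmt_9 (n m : ℕ) (α β rmin rmax T : ℝ)
    (hα : 0 < α) (hβ : 0 ≤ β) (hrmin : 0 < rmin) (hT : 0 ≤ T)
    (f : EuclideanSpace ℝ (Fin n) → EuclideanSpace ℝ (Fin m) → EuclideanSpace ℝ (Fin n))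
    (h : EuclideanSpace ℝ (Fin n) → EuclideanSpace ℝ (Fin m) → EuclideanSpace ℝ (Fin m))
    (hdiss : ∀ (Y : EuclideanSpace ℝ (Fin n)) (C : EuclideanSpace ℝ (Fin m)),
      (inner ℝ (f Y C) Y : ℝ) + (inner ℝ (h Y C) C : ℝ) ≤ -α * (‖Y‖^2 + ‖C‖^2) + β)
    (r : ℝ → ℝ) (hr : ∀ t ∈ Set.Icc 0 T, rmin ≤ r t ∧ r t ≤ rmax)
    (Y : ℝ → EuclideanSpace ℝ (Fin n)) (C : ℝ → EuclideanSpace ℝ (Fin m))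
    (hY : ∀ t ∈ Set.Icc 0 T, HasDerivAt Y (r t • f (Y t) (C t)) t)
    (hC : ∀ t ∈ Set.Icc 0 T, HasDerivAt C (r t • h (Y t) (C t)) t) :
    ∀ t ∈ Set.Icc 0 T,
      (1/2) * (‖Y t‖^2 + ‖C t‖^2) ≤
        (1/2) * (‖Y 0‖^2 + ‖C 0‖^2) + β * rmax / (2 * α * rmin) := by
  -- Energy and its derivative
  set E : ℝ → ℝ := fun t => (1/2) * (‖Y t‖^2 + ‖C t‖^2) with hE
  set E' : ℝ → ℝ := fun t =>
    r t * ((inner ℝ (f (Y t) (C t)) (Y t) : ℝ) + (inner ℝ (h (Y t) (C t)) (C t) : ℝ)) with hE'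
  have hrmax : rmin ≤ rmax := le_trans (hr 0 ⟨le_refl 0, hT⟩).1 (hr 0 ⟨le_refl 0, hT⟩).2
  have hderiv : ∀ t ∈ Set.Icc (0:ℝ) T, HasDerivAt E (E' t) t := by
    intro t ht
    have h1 : HasDerivAt (fun s => (inner ℝ (Y s) (Y s) : ℝ))
        ((inner ℝ (Y t) (r t • f (Y t) (C t)) : ℝ) + (inner ℝ (r t • f (Y t) (C t)) (Y t) : ℝ)) t :=
      HasDerivAt.inner ℝ (hY t ht) (hY t ht)
    have h2 : HasDerivAt (fun s => (inner ℝ (C s) (C s) : ℝ))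
        ((inner ℝ (C t) (r t • h (Y t) (C t)) : ℝ) + (inner ℝ (r t • h (Y t) (C t)) (C t) : ℝ)) t :=
      HasDerivAt.inner ℝ (hC t ht) (hC t ht)
    have h3 := ((h1.add h2).const_mul (1/2 : ℝ))
    have heq : E = fun s => (1/2) * ((inner ℝ (Y s) (Y s) : ℝ) + (inner ℝ (C s) (C s) : ℝ)) := by
      funext s
      simp only [hE, real_inner_self_eq_norm_sq]
    rw [heq]
    refine h3.congr_deriv ?_
    simp only [hE', real_inner_smul_left, real_inner_smul_right,
      real_inner_comm (Y t) (f (Y t) (C t)), real_inner_comm (C t) (h (Y t) (C t))]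
    ring
  -- continuity of E on [0, T]
  have hcont : ContinuousOn E (Set.Icc 0 T) := fun t ht =>
    (hderiv t ht).continuousAt.continuousWithinAt
  -- the slope condition from the derivative
  have hslope : ∀ x ∈ Set.Ico (0:ℝ) T, ∀ ρ, E' x < ρ →
      ∃ᶠ z in nhdsWithin x (Set.Ioi x), (z - x)⁻¹ * (E z - E x) < ρ := by
    intro x hx ρ hρ
    have hd : HasDerivWithinAt E (E' x) (Set.Ici x) x :=
      (hderiv x ⟨hx.1, le_of_lt hx.2⟩).hasDerivWithinAt
    have := hd.liminf_right_slope_le hρ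
    refine this.mono fun z hz => ?_
    rwa [slope_def_field, div_eq_inv_mul] at hz
  -- the differential inequality E' ≤ K E + ε, K = -2 α rmin, ε = β rmax
  have hbound : ∀ x ∈ Set.Ico (0:ℝ) T, E' x ≤ (-(2 * α * rmin)) * E x + β * rmax := by
    intro x hx
    have hx' : x ∈ Set.Icc (0:ℝ) T := ⟨hx.1, le_of_lt hx.2⟩
    obtain ⟨hr1, hr2⟩ := hr x hx'
    have hrpos : 0 < r x := lt_of_lt_of_le hrmin hr1
    have hd := hdiss (Y x) (C x)
    have hS : (0:ℝ) ≤ ‖Y x‖^2 + ‖C x‖^2 := by positivity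
    have step1 : E' x ≤ r x * (-α * (‖Y x‖^2 + ‖C x‖^2) + β) :=
      mul_le_mul_of_nonneg_left hd (le_of_lt hrpos)
    have step2 : r x * (-α * (‖Y x‖^2 + ‖C x‖^2)) ≤ rmin * (-α * (‖Y x‖^2 + ‖C x‖^2)) := by
      apply mul_le_mul_of_nonpos_right hr1
      nlinarith
    have step3 : r x * β ≤ rmax * β := mul_le_mul_of_nonneg_right hr2 hβ
    have : E' x ≤ rmin * (-α * (‖Y x‖^2 + ‖C x‖^2)) + rmax * β := by
      calc E' x ≤ r x * (-α * (‖Y x‖^2 + ‖C x‖^2) + β) := step1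
        _ = r x * (-α * (‖Y x‖^2 + ‖C x‖^2)) + r x * β := by ring
        _ ≤ rmin * (-α * (‖Y x‖^2 + ‖C x‖^2)) + rmax * β := add_le_add step2 step3
    calc E' x ≤ rmin * (-α * (‖Y x‖^2 + ‖C x‖^2)) + rmax * β := this
      _ = (-(2 * α * rmin)) * E x + β * rmax := by simp [hE]; ring
  -- Grönwall
  have hgr := le_gronwallBound_of_liminf_deriv_right_le hcont hslope (le_refl (E 0)) hbound
  intro t ht
  have := hgr t ht
  set K : ℝ := -(2 * α * rmin) with hK
  have hKneg : K < 0 := by simp [hK]; positivity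
  have hKne : K ≠ 0 := ne_of_lt hKneg
  rw [gronwallBound_of_K_ne_0 hKne] at this
  have hexp1 : Real.exp (K * (t - 0)) ≤ 1 := by
    apply Real.exp_le_one_iff.mpr
    have : (0:ℝ) ≤ t - 0 := by simpa using ht.1
    nlinarith
  have hexp0 : 0 < Real.exp (K * (t - 0)) := Real.exp_pos _
  have hE0 : 0 ≤ E 0 := by positivity
  have key : E 0 * Real.exp (K * (t - 0)) + β * rmax / K * (Real.exp (K * (t - 0)) - 1)
      ≤ E 0 + β * rmax / (2 * α * rmin) := by
    have h1 : E 0 * Real.exp (K * (t - 0)) ≤ E 0 := by nlinarith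
    have h2 : β * rmax / K * (Real.exp (K * (t - 0)) - 1) ≤ β * rmax / (2 * α * rmin) := by
      have hdiv : β * rmax / K = -(β * rmax / (2 * α * rmin)) := by
        rw [hK]; field_simp
      rw [hdiv]
      have hnn : 0 ≤ β * rmax / (2 * α * rmin) := by
        have : 0 ≤ rmax := le_trans (le_of_lt hrmin) hrmax
        positivity
      nlinarith
    linarith
  exact le_trans this key
end

section
/- Let Y : [0,1] × [0,T] → ℝⁿ be given by Y(z,t) = φ(Z(0;z,t)) + ∫_0^t F(Y(Z(s;z,t),s), s) ds, where φ ∈ C¹([0,1];ℝⁿ), Z(s;z,t) = z − ∫_s^t v(τ)dτ with v continuous, and F is C¹ in z (along characteristics) with ‖∂_z F‖_∞ < ∞. Then ∂_z Y exists, is continuous, and satisfies ‖∂_z Y(·,t)‖_∞ ≤ ‖φ'‖_∞ + t·‖∂_z F‖_∞ for each t ∈ [0,T]. -/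
open MeasureTheory Metric

/-- Upgrade from mild to classical solution: differentiating the Duhamel formula
`Y(z,t) = φ(Z(0;z,t)) + ∫_0^t G(Z(s;z,t),s) ds` in `z`, where
`Z(s;z,t) = z − ∫_s^t v`, yields a continuous spatial derivative `∂_z Y` with
`‖∂_z Y(·,t)‖_∞ ≤ ‖φ'‖_∞ + t ‖∂_z G‖_∞`. -/
theorem stmt_15 (n : ℕ) (T Kφ K : ℝ) (hT : 0 ≤ T) (hKφ : 0 ≤ Kφ) (hK : 0 ≤ K)
    (v : ℝ → ℝ) (hv : Continuous v)
    (φ φ' : ℝ → EuclideanSpace ℝ (Fin n))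
    (hφ : ∀ x, HasDerivAt φ (φ' x) x) (hφ'c : Continuous φ')
    (hφ'bd : ∀ x, ‖φ' x‖ ≤ Kφ)
    (G Gz : ℝ → ℝ → EuclideanSpace ℝ (Fin n))
    (hGc : Continuous (fun p : ℝ × ℝ => G p.1 p.2))
    (hGzc : Continuous (fun p : ℝ × ℝ => Gz p.1 p.2))
    (hGz : ∀ s x, HasDerivAt (fun x => G x s) (Gz x s) x)
    (hGzbd : ∀ x s, ‖Gz x s‖ ≤ K)
    (Y : ℝ → ℝ → EuclideanSpace ℝ (Fin n))
    (hY : ∀ z t : ℝ, Y z t =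
      φ ((z - ∫ τ in (0:ℝ)..t, v τ)) +
        ∫ s in (0:ℝ)..t, G (z - ∫ τ in s..t, v τ) s) :
    ∃ Yz : ℝ → ℝ → EuclideanSpace ℝ (Fin n),
      Continuous (fun p : ℝ × ℝ => Yz p.1 p.2) ∧
      (∀ t z : ℝ, HasDerivAt (fun z => Y z t) (Yz z t) z) ∧
      (∀ t ∈ Set.Icc (0:ℝ) T, ∀ z ∈ Set.Icc (0:ℝ) 1, ‖Yz z t‖ ≤ Kφ + t * K) := by
  set I : ℝ → ℝ := fun t => ∫ τ in (0:ℝ)..t, v τ with hIdef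
  have hvint : ∀ a b : ℝ, IntervalIntegrable v volume a b :=
    fun a b => hv.intervalIntegrable a b
  have hI : Continuous I := intervalIntegral.continuous_primitive hvint 0
  -- rewrite Y in a form where the integrand's `z`-dependence is through `z - I t`
  have hY' : ∀ z t, Y z t = φ (z - I t) + ∫ s in (0:ℝ)..t, G ((z - I t) + I s) s := by
    intro z t
    rw [hY]
    congr 1
    apply intervalIntegral.integral_congr
    intro s _
    show G (z - ∫ τ in s..t, v τ) s = G ((z - I t) + I s) s
    congr 1
    have h1 : I t - I s = ∫ τ in s..t, v τ :=
      intervalIntegral.integral_interval_sub_left (hvint 0 t) (hvint 0 s)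
    rw [← h1]; ring
  -- key: derivative under the integral sign
  have key : ∀ (t x₀ : ℝ), HasDerivAt (fun x => ∫ s in (0:ℝ)..t, G (x + I s) s)
      (∫ s in (0:ℝ)..t, Gz (x₀ + I s) s) x₀ := by
    intro t x₀
    have hcont : ∀ x : ℝ, Continuous (fun s => G (x + I s) s) := fun x =>
      hGc.comp ((continuous_const.add hI).prodMk continuous_id)
    have hcont' : ∀ x : ℝ, Continuous (fun s => Gz (x + I s) s) := fun x =>
      hGzc.comp ((continuous_const.add hI).prodMk continuous_id)
    have := intervalIntegral.hasDerivAt_integral_of_dominated_loc_of_deriv_le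
      (F := fun x s => G (x + I s) s) (F' := fun x s => Gz (x + I s) s)
      (a := 0) (b := t) (x₀ := x₀) (bound := fun _ => K) (μ := volume)
      (s := Set.univ) Filter.univ_mem
      (Filter.Eventually.of_forall fun x => ((hcont x).aestronglyMeasurable).restrict)
      ((hcont x₀).intervalIntegrable 0 t)
      ((hcont' x₀).aestronglyMeasurable).restrict
      (Filter.Eventually.of_forall fun s _ x _ => hGzbd _ s)
      (intervalIntegrable_const)
      (Filter.Eventually.of_forall fun s _ x _ => by
        have h1 : HasDerivAt (fun x : ℝ => x + I s) 1 x := (hasDerivAt_id x).add_const (I s)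
        have h2 := (hGz s (x + I s)).scomp x h1
        simpa [Function.comp_def] using h2)
    exact this.2
  refine ⟨fun z t => φ' (z - I t) + ∫ s in (0:ℝ)..t, Gz ((z - I t) + I s) s, ?_, ?_, ?_⟩
  · -- continuity
    have c1 : Continuous fun p : ℝ × ℝ => φ' (p.1 - I p.2) :=
      hφ'c.comp (continuous_fst.sub (hI.comp continuous_snd))
    have c2 : Continuous fun p : ℝ × ℝ => ∫ s in (0:ℝ)..p.2, Gz ((p.1 - I p.2) + I s) s := by
      have hf : Continuous (Function.uncurry fun (p : ℝ × ℝ) (s : ℝ) => Gz ((p.1 - I p.2) + I s) s) := by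
        show Continuous fun q : (ℝ × ℝ) × ℝ => Gz ((q.1.1 - I q.1.2) + I q.2) q.2
        exact hGzc.comp ((((continuous_fst.comp continuous_fst).sub
          (hI.comp (continuous_snd.comp continuous_fst))).add
            (hI.comp continuous_snd)).prodMk continuous_snd)
      exact intervalIntegral.continuous_parametric_intervalIntegral_of_continuous hf continuous_snd
    exact c1.add c2
  · -- differentiability
    intro t z
    have hinner : HasDerivAt (fun z : ℝ => z - I t) 1 z := (hasDerivAt_id z).sub_const (I t)
    have h1 : HasDerivAt (fun z => φ (z - I t)) (φ' (z - I t)) z := by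
      have := (hφ (z - I t)).scomp z hinner; simpa [Function.comp_def] using this
    have h2 : HasDerivAt (fun z => ∫ s in (0:ℝ)..t, G ((z - I t) + I s) s)
        (∫ s in (0:ℝ)..t, Gz ((z - I t) + I s) s) z := by
      have := (key t (z - I t)).scomp z hinner
      simpa [Function.comp_def] using this
    have := h1.add h2
    apply this.congr_of_eventuallyEq
    filter_upwards with w
    rw [hY']
    rfl
  · -- bound
    intro t ht z _
    have hb : ‖∫ s in (0:ℝ)..t, Gz ((z - I t) + I s) s‖ ≤ K * |t - 0| :=
      intervalIntegral.norm_integral_le_of_norm_le_const fun s _ => hGzbd _ s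
    calc ‖φ' (z - I t) + ∫ s in (0:ℝ)..t, Gz ((z - I t) + I s) s‖
        ≤ ‖φ' (z - I t)‖ + ‖∫ s in (0:ℝ)..t, Gz ((z - I t) + I s) s‖ := norm_add_le _ _
      _ ≤ Kφ + K * |t - 0| := add_le_add (hφ'bd _) hb
      _ = Kφ + t * K := by rw [sub_zero, abs_of_nonneg ht.1]; ring
end
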